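/- Let H ∈ (1/2,1) and define the kernel K_H(t,s) = c_H s^{1/2−H} ∫_s^t (u−s)^{H−3/2} u^{H−1/2} du for 0 < s < t ≤ 1, and K_H(t,s) = 0 for s ≥ t. Then for every û ∈ L²([0,1];ℝ) and every t ∈ [0,1], ∫_0^t K_H(t,s) û(s) ds = ∫_0^t (K̇_H û)(r) dr. In particular, the function t ↦ ∫_0^t K_H(t,s) û(s) ds is absolutely continuous on [0,1] with almost-everywhere derivative (K̇_H û)(t) = c_H t^{H−1/2} ∫_0^t (t−s)^{H−3/2} s^{1/2−H} û(s) ds. -/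

import Mathlib

open MeasureTheory Set

noncomputable section

/-- The constant `c_H = (H(2H-1)/B(2-2H, H-1/2))^{1/2}`. -/
def cH (H : ℝ) : ℝ :=
  Real.sqrt (H * (2 * H - 1) /
    (Real.Gamma (2 - 2 * H) * Real.Gamma (H - 1 / 2) / Real.Gamma ((2 - 2 * H) + (H - 1 / 2))))

/-- The operator `K̇_H`:
`(K̇_H f)(t) = c_H t^{H-1/2} ∫_0^t (t-s)^{H-3/2} s^{1/2-H} f(s) ds`. -/
def Kdot (H : ℝ) (f : ℝ → ℝ) (t : ℝ) : ℝ :=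
  cH H * t ^ (H - 1 / 2) *
    ∫ s in Ioo (0 : ℝ) t, (t - s) ^ (H - 3 / 2) * s ^ (1 / 2 - H) * f s

/-- The Cameron–Martin kernel of fBm:
`K_H(t,s) = c_H s^{1/2-H} ∫_s^t (u-s)^{H-3/2} u^{H-1/2} du` for `s < t`, and `0` for
`s ≥ t`. -/
def KHkernel (H t s : ℝ) : ℝ :=
  if s < t then
    cH H * s ^ (1 / 2 - H) * ∫ u in Ioo s t, (u - s) ^ (H - 3 / 2) * u ^ (H - 1 / 2)
  else 0

open Filter intervalIntegral Topology

theorem suInt (H : ℝ) (hH : H ∈ Ioo (1/2 : ℝ) 1) (u : ℝ → ℝ)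
    (hu : MemLp u 2 (volume.restrict (Icc (0:ℝ) 1))) :
    Integrable (fun s => s ^ (1/2 - H) * ‖u s‖) (volume.restrict (Icc (0:ℝ) 1)) := by
  obtain ⟨hH1, hH2⟩ := hH
  have hmeas : AEStronglyMeasurable (fun s : ℝ => s ^ (1/2 - H) * ‖u s‖)
      (volume.restrict (Icc (0:ℝ) 1)) :=
    ((by fun_prop : Measurable fun s : ℝ => s ^ (1/2 - H)).aestronglyMeasurable).mul hu.1.norm
  have hpow : IntegrableOn (fun s : ℝ => s ^ (1 - 2*H)) (Icc (0:ℝ) 1) := by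
    rw [integrableOn_Icc_iff_integrableOn_Ioo]
    exact (integrableOn_Ioo_rpow_iff one_pos).2 (by linarith)
  have hsq : Integrable (fun s => u s ^ 2) (volume.restrict (Icc (0:ℝ) 1)) := hu.integrable_sq
  refine Integrable.mono' (hpow.add hsq) hmeas ?_
  filter_upwards [ae_restrict_mem measurableSet_Icc] with s hs
  have hs0 : (0:ℝ) ≤ s := hs.1
  have h1 : ‖s ^ (1/2 - H) * ‖u s‖‖ = s ^ (1/2 - H) * ‖u s‖ := by
    rw [Real.norm_of_nonneg (mul_nonneg (Real.rpow_nonneg hs0 _) (norm_nonneg _))]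
  rw [h1, Pi.add_apply]
  have hsq' : s ^ (1/2 - H) * s ^ (1/2 - H) = s ^ (1 - 2*H) := by
    rcases eq_or_lt_of_le hs0 with h | h
    · rw [← h, Real.zero_rpow (by norm_num; linarith), Real.zero_rpow (by linarith), mul_zero]
    · rw [← Real.rpow_add h]; congr 1; ring
  have h2 : ‖u s‖ * ‖u s‖ = u s ^ 2 := by rw [Real.norm_eq_abs, abs_mul_abs_self]; ring
  nlinarith [sq_nonneg (s ^ (1/2 - H) - ‖u s‖), h2, hsq']

def Fker (H : ℝ) (u : ℝ → ℝ) (p : ℝ × ℝ) : ℝ :=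
  if p.1 < p.2 then
    (cH H * p.1 ^ (1 / 2 - H) * u p.1) * ((p.2 - p.1) ^ (H - 3 / 2) * p.2 ^ (H - 1 / 2))
  else 0

theorem rpowInt (H : ℝ) (hH : H ∈ Ioo (1/2 : ℝ) 1) (s t : ℝ) (hst : s ≤ t) :
    IntegrableOn (fun r : ℝ => (r - s) ^ (H - 3/2)) (Ioo s t) := by
  have h := (intervalIntegrable_rpow' (show (-1:ℝ) < H - 3/2 by linarith [hH.1])
    (a := 0) (b := t - s)).comp_sub_right s
  simp only [zero_add, sub_add_cancel] at h
  rwa [intervalIntegrable_iff_integrableOn_Ioo_of_le hst] at h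

theorem innerInt (H : ℝ) (hH : H ∈ Ioo (1/2 : ℝ) 1) (s t : ℝ) (hs : 0 ≤ s) (hst : s ≤ t)
    (ht1 : t ≤ 1) :
    IntegrableOn (fun r : ℝ => (r - s) ^ (H - 3/2) * r ^ (H - 1/2)) (Ioo s t) := by
  refine Integrable.mono' (rpowInt H hH s t hst) ?_ ?_
  · exact ((by fun_prop : Measurable fun r : ℝ => (r - s) ^ (H - 3/2) * r ^ (H - 1/2))).aestronglyMeasurable
  · filter_upwards [ae_restrict_mem measurableSet_Ioo] with r hr
    have h1 : (0:ℝ) ≤ r - s := by linarith [hr.1]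
    have h2 : (0:ℝ) ≤ r := le_trans hs hr.1.le
    rw [Real.norm_of_nonneg (mul_nonneg (Real.rpow_nonneg h1 _) (Real.rpow_nonneg h2 _))]
    calc (r - s) ^ (H - 3/2) * r ^ (H - 1/2)
        ≤ (r - s) ^ (H - 3/2) * 1 := by
          have := Real.rpow_le_one h2 (by linarith [hr.2] : r ≤ 1) (by linarith [hH.1] : 0 ≤ H - 1/2)
          exact mul_le_mul_of_nonneg_left this (Real.rpow_nonneg h1 _)
      _ = (r - s) ^ (H - 3/2) := mul_one _

theorem Jval (H : ℝ) (hH : H ∈ Ioo (1/2 : ℝ) 1) (s t : ℝ) (hst : s ≤ t) (hts : t - s ≤ 1) :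
    ∫ r in Ioo s t, (r - s) ^ (H - 3/2) ≤ (H - 1/2)⁻¹ := by
  have hb : (-1:ℝ) < H - 3/2 := by linarith [hH.1]
  have hval : ∫ r in Ioo s t, (r - s) ^ (H - 3/2) = (t - s) ^ (H - 1/2) / (H - 1/2) := by
    rw [← integral_Ioc_eq_integral_Ioo, ← intervalIntegral.integral_of_le hst,
      show (∫ x in s..t, (x - s) ^ (H - 3/2)) = ∫ x in (s - s)..(t - s), x ^ (H - 3/2) from
        intervalIntegral.integral_comp_sub_right (fun y => y ^ (H - 3/2)) s,
      sub_self, integral_rpow (Or.inl hb),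
      Real.zero_rpow (by intro hc; nlinarith [hH.1] : H - 3/2 + 1 ≠ 0)]
    have : H - 3/2 + 1 = H - 1/2 := by ring
    rw [this]; ring
  rw [hval]
  have h1 : (t - s) ^ (H - 1/2) ≤ 1 :=
    Real.rpow_le_one (by linarith) hts (by linarith [hH.1])
  rw [div_le_iff₀ (by linarith [hH.1] : (0:ℝ) < H - 1/2)]
  calc (t - s) ^ (H - 1/2) ≤ 1 := h1
    _ ≤ (H - 1/2)⁻¹ * (H - 1/2) := by
        rw [inv_mul_cancel₀ (by linarith [hH.1] : H - 1/2 ≠ 0)]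

theorem FkerInt (H : ℝ) (hH : H ∈ Ioo (1/2 : ℝ) 1) (u : ℝ → ℝ) (hm : StronglyMeasurable u)
    (hsu : Integrable (fun s => s ^ (1/2 - H) * ‖u s‖) (volume.restrict (Icc (0:ℝ) 1)))
    (t : ℝ) (ht0 : 0 < t) (ht1 : t ≤ 1) :
    Integrable (Fker H u) ((volume.restrict (Ioo (0:ℝ) t)).prod (volume.restrict (Ioo (0:ℝ) t))) := by
  have hcH : 0 ≤ cH H := Real.sqrt_nonneg _
  have hum : Measurable u := hm.measurable
  have hmF : Measurable (Fker H u) := by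
    unfold Fker
    refine Measurable.ite (measurableSet_lt measurable_fst measurable_snd) ?_ measurable_const
    fun_prop
  rw [integrable_prod_iff hmF.aestronglyMeasurable]
  have hIoi : ∀ s : ℝ, s ∈ Ioo (0:ℝ) t → Ioi s ∩ Ioo 0 t = Ioo s t := by
    intro s hs
    ext x; simp only [mem_inter_iff, mem_Ioi, mem_Ioo]
    constructor
    · rintro ⟨h1, _, h3⟩; exact ⟨h1, h3⟩
    · rintro ⟨h1, h2⟩; exact ⟨h1, hs.1.trans h1, h2⟩
  constructor
  · refine (ae_restrict_iff' measurableSet_Ioo).2 (Eventually.of_forall fun s hs => ?_)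
    have hrw : (fun r => Fker H u (s, r)) = fun r =>
        (cH H * s ^ (1/2 - H) * u s) *
          ((Ioi s).indicator (fun r => (r - s) ^ (H - 3/2) * r ^ (H - 1/2)) r) := by
      funext r; simp only [Fker, indicator_apply, mem_Ioi, mul_ite, mul_zero]
    rw [hrw]
    refine Integrable.const_mul ?_ _
    rw [integrable_indicator_iff measurableSet_Ioi, IntegrableOn,
      Measure.restrict_restrict measurableSet_Ioi, hIoi s hs]
    exact innerInt H hH s t hs.1.le hs.2.le ht1
  · have hbnd : Integrable (fun s : ℝ => (cH H * (H - 1/2)⁻¹) * (s ^ (1/2 - H) * ‖u s‖))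
        (volume.restrict (Ioo (0:ℝ) t)) :=
      (hsu.mono_measure (Measure.restrict_mono
        (fun x hx => mem_Icc.2 ⟨(mem_Ioo.1 hx).1.le, (mem_Ioo.1 hx).2.le.trans ht1⟩)
        le_rfl)).const_mul _
    refine Integrable.mono' hbnd (hmF.aestronglyMeasurable.norm.integral_prod_right') ?_
    refine (ae_restrict_iff' measurableSet_Ioo).2 (Eventually.of_forall fun s hs => ?_)
    rw [Real.norm_of_nonneg (integral_nonneg fun r => norm_nonneg _)]
    set X : ℝ := cH H * s ^ (1/2 - H) * ‖u s‖ with hX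
    have hX0 : 0 ≤ X := mul_nonneg (mul_nonneg hcH (Real.rpow_nonneg hs.1.le _)) (norm_nonneg _)
    have hgint : Integrable
        (fun r => X * (Ioi s).indicator (fun r => (r - s) ^ (H - 3/2)) r)
        (volume.restrict (Ioo (0:ℝ) t)) := by
      refine Integrable.const_mul ?_ _
      rw [integrable_indicator_iff measurableSet_Ioi, IntegrableOn,
        Measure.restrict_restrict measurableSet_Ioi, hIoi s hs]
      exact rpowInt H hH s t hs.2.le
    have hptwise : ∀ᵐ r ∂(volume.restrict (Ioo (0:ℝ) t)),
        ‖Fker H u (s, r)‖ ≤ X * (Ioi s).indicator (fun r => (r - s) ^ (H - 3/2)) r := by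
      refine (ae_restrict_iff' measurableSet_Ioo).2 (Eventually.of_forall fun r hr => ?_)
      by_cases hsr : s < r
      · rw [Fker]; simp only [hsr, if_true, indicator_of_mem (mem_Ioi.2 hsr)]
        have h1 : (0:ℝ) ≤ r - s := by linarith
        have h2 : (0:ℝ) ≤ r := hr.1.le
        simp only [norm_mul]
        rw [Real.norm_of_nonneg hcH,
          Real.norm_of_nonneg (Real.rpow_nonneg hs.1.le _),
          Real.norm_of_nonneg (Real.rpow_nonneg h1 _),
          Real.norm_of_nonneg (Real.rpow_nonneg h2 _)]
        have h3 : r ^ (H - 1/2) ≤ 1 :=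
          Real.rpow_le_one h2 (by linarith [hr.2] : r ≤ 1) (by linarith [hH.1])
        calc cH H * s ^ (1/2 - H) * ‖u s‖ * ((r - s) ^ (H - 3/2) * r ^ (H - 1/2))
            ≤ cH H * s ^ (1/2 - H) * ‖u s‖ * ((r - s) ^ (H - 3/2) * 1) := by
              refine mul_le_mul_of_nonneg_left ?_ hX0
              exact mul_le_mul_of_nonneg_left h3 (Real.rpow_nonneg h1 _)
          _ = X * (r - s) ^ (H - 3/2) := by rw [hX]; ring
      · rw [Fker]; simp only [hsr, if_false]
        rw [indicator_of_notMem (by simpa using hsr)]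
        simp [hX0]
    calc (∫ r, ‖Fker H u (s, r)‖ ∂(volume.restrict (Ioo (0:ℝ) t)))
        ≤ ∫ r, X * (Ioi s).indicator (fun r => (r - s) ^ (H - 3/2)) r
            ∂(volume.restrict (Ioo (0:ℝ) t)) :=
          integral_mono_of_nonneg (Eventually.of_forall fun r => norm_nonneg _) hgint hptwise
      _ = X * ∫ r in Ioo s t, (r - s) ^ (H - 3/2) := by
          rw [MeasureTheory.integral_const_mul, setIntegral_indicator measurableSet_Ioi]
          congr 2
          rw [inter_comm, ← hIoi s hs, inter_comm]
      _ ≤ X * (H - 1/2)⁻¹ := by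
          refine mul_le_mul_of_nonneg_left ?_ hX0
          exact Jval H hH s t hs.2.le (by linarith [hs.1, hs.2])
      _ = cH H * (H - 1/2)⁻¹ * (s ^ (1/2 - H) * ‖u s‖) := by rw [hX]; ring

theorem Fker_left (H : ℝ) (u : ℝ → ℝ) (t : ℝ) (s : ℝ) (hs : s ∈ Ioo (0:ℝ) t) :
    KHkernel H t s * u s = ∫ r in Ioo (0:ℝ) t, Fker H u (s, r) := by
  have hrw : (fun r => Fker H u (s, r)) = fun r =>
      (cH H * s ^ (1 / 2 - H) * u s) *
        ((Ioi s).indicator (fun r => (r - s) ^ (H - 3 / 2) * r ^ (H - 1 / 2)) r) := by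
    funext r; simp only [Fker, indicator_apply, mem_Ioi, mul_ite, mul_zero]
  have hset : Ioo (0:ℝ) t ∩ Ioi s = Ioo s t := by
    ext x; simp only [mem_inter_iff, mem_Ioi, mem_Ioo]
    constructor
    · rintro ⟨⟨_, h2⟩, h3⟩; exact ⟨h3, h2⟩
    · rintro ⟨h1, h2⟩; exact ⟨⟨hs.1.trans h1, h2⟩, h1⟩
  rw [hrw, MeasureTheory.integral_const_mul, setIntegral_indicator measurableSet_Ioi, hset,
    KHkernel, if_pos hs.2]
  ring

theorem Fker_right (H : ℝ) (u : ℝ → ℝ) (t : ℝ) (r : ℝ) (hr : r ∈ Ioo (0:ℝ) t) :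
    ∫ s in Ioo (0:ℝ) t, Fker H u (s, r) = Kdot H u r := by
  have hrw : (fun s => Fker H u (s, r)) = fun s =>
      (Iio r).indicator (fun s =>
        (cH H * s ^ (1 / 2 - H) * u s) * ((r - s) ^ (H - 3 / 2) * r ^ (H - 1 / 2))) s := by
    funext s; simp only [Fker, indicator_apply, mem_Iio]
  have hset : Ioo (0:ℝ) t ∩ Iio r = Ioo 0 r := by
    ext x; simp only [mem_inter_iff, mem_Iio, mem_Ioo]
    constructor
    · rintro ⟨⟨h1, _⟩, h3⟩; exact ⟨h1, h3⟩
    · rintro ⟨h1, h2⟩; exact ⟨⟨h1, h2.trans hr.2⟩, h2⟩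
  rw [hrw, setIntegral_indicator measurableSet_Iio, hset]
  calc ∫ s in Ioo (0:ℝ) r,
        (cH H * s ^ (1 / 2 - H) * u s) * ((r - s) ^ (H - 3 / 2) * r ^ (H - 1 / 2))
      = ∫ s in Ioo (0:ℝ) r,
          (cH H * r ^ (H - 1 / 2)) * ((r - s) ^ (H - 3 / 2) * s ^ (1 / 2 - H) * u s) :=
        setIntegral_congr_fun measurableSet_Ioo (fun s _ => by ring)
    _ = Kdot H u r := by rw [MeasureTheory.integral_const_mul, Kdot]

theorem part1 (H : ℝ) (hH : H ∈ Ioo (1/2 : ℝ) 1) (u : ℝ → ℝ) (hm : StronglyMeasurable u)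
    (hsu : Integrable (fun s => s ^ (1/2 - H) * ‖u s‖) (volume.restrict (Icc (0:ℝ) 1)))
    (t : ℝ) (ht : t ∈ Icc (0:ℝ) 1) :
    ∫ s in Ioo (0 : ℝ) t, KHkernel H t s * u s = ∫ r in Ioo (0 : ℝ) t, Kdot H u r := by
  rcases eq_or_lt_of_le ht.1 with h | h
  · rw [← h]; simp
  calc ∫ s in Ioo (0:ℝ) t, KHkernel H t s * u s
      = ∫ s in Ioo (0:ℝ) t, ∫ r in Ioo (0:ℝ) t, Fker H u (s, r) :=
        setIntegral_congr_fun measurableSet_Ioo (fun s hs => Fker_left H u t s hs)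
    _ = ∫ r in Ioo (0:ℝ) t, ∫ s in Ioo (0:ℝ) t, Fker H u (s, r) :=
        MeasureTheory.integral_integral_swap (FkerInt H hH u hm hsu t h ht.2)
    _ = ∫ r in Ioo (0:ℝ) t, Kdot H u r :=
        setIntegral_congr_fun measurableSet_Ioo (fun r hr => Fker_right H u t r hr)

theorem KdotInt (H : ℝ) (hH : H ∈ Ioo (1/2 : ℝ) 1) (u : ℝ → ℝ) (hm : StronglyMeasurable u)
    (hsu : Integrable (fun s => s ^ (1/2 - H) * ‖u s‖) (volume.restrict (Icc (0:ℝ) 1))) :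
    IntegrableOn (Kdot H u) (Ioo (0:ℝ) 1) := by
  have h := (FkerInt H hH u hm hsu 1 one_pos le_rfl).integral_prod_right
  refine h.congr ?_
  refine (ae_restrict_iff' measurableSet_Ioo).2 (Eventually.of_forall fun r hr => ?_)
  exact Fker_right H u 1 r hr

theorem aeIoo : ∀ᵐ t ∂(volume.restrict (Icc (0:ℝ) 1)), t ∈ Ioo (0:ℝ) 1 := by
  have h0 : (volume.restrict (Icc (0:ℝ) 1)) ({0, 1} : Set ℝ) = 0 := by
    refine le_antisymm (le_trans (Measure.restrict_le_self _) ?_) zero_le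
    rw [show ({0, 1} : Set ℝ) = {0} ∪ {1} from rfl]
    exact le_of_eq (measure_union_null (measure_singleton 0) (measure_singleton 1))
  filter_upwards [ae_restrict_mem measurableSet_Icc, measure_eq_zero_iff_ae_notMem.1 h0]
    with t h1 h3
  simp only [mem_insert_iff, mem_singleton_iff, not_or] at h3
  exact ⟨h1.1.lt_of_ne (Ne.symm h3.1), h1.2.lt_of_ne h3.2⟩

theorem main' (H : ℝ) (hH : H ∈ Ioo (1 / 2 : ℝ) 1)
    (u : ℝ → ℝ) (hm : StronglyMeasurable u)
    (hsu : Integrable (fun s => s ^ (1/2 - H) * ‖u s‖) (volume.restrict (Icc (0:ℝ) 1))) :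
    (∀ t ∈ Icc (0 : ℝ) 1,
        ∫ s in Ioo (0 : ℝ) t, KHkernel H t s * u s = ∫ r in Ioo (0 : ℝ) t, Kdot H u r) ∧
    ∀ᵐ t ∂(volume.restrict (Icc (0 : ℝ) 1)),
      HasDerivAt (fun τ => ∫ s in Ioo (0 : ℝ) τ, KHkernel H τ s * u s) (Kdot H u t) t := by
  refine ⟨fun t ht => part1 H hH u hm hsu t ht, ?_⟩
  set g := Kdot H u with hg
  set gi := (Ioo (0:ℝ) 1).indicator g with hgidef
  have hgi : Integrable gi volume := by
    rw [hgidef, integrable_indicator_iff measurableSet_Ioo]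
    exact KdotInt H hH u hm hsu
  have hFTC : ∀ᵐ x : ℝ, HasDerivAt (fun t => ∫ s in (0:ℝ)..t, gi s) (gi x) x := by
    filter_upwards [(IsUnifLocDoublingMeasure.vitaliFamily (volume : Measure ℝ) 1).ae_tendsto_average
      hgi.locallyIntegrable] with x hx
    have hr : Tendsto (fun y => ⨍ s in Icc x y, gi s) (𝓝[>] x) (𝓝 (gi x)) :=
      hx.comp (Real.tendsto_Icc_vitaliFamily_right x)
    have hl : Tendsto (fun y => ⨍ s in Icc y x, gi s) (𝓝[<] x) (𝓝 (gi x)) :=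
      hx.comp (Real.tendsto_Icc_vitaliFamily_left x)
    rw [hasDerivAt_iff_tendsto_slope, ← nhdsLT_sup_nhdsGT, tendsto_sup]
    constructor
    · apply hl.congr'
      filter_upwards [self_mem_nhdsWithin] with y (hy : y < x)
      have h1 : (∫ s in (0:ℝ)..x, gi s) - ∫ s in (0:ℝ)..y, gi s = ∫ s in y..x, gi s :=
        intervalIntegral.integral_interval_sub_left hgi.intervalIntegrable hgi.intervalIntegrable
      rw [setAverage_eq, integral_Icc_eq_integral_Ioc, ← intervalIntegral.integral_of_le hy.le,
        Real.volume_real_Icc_of_le hy.le, slope_def_field]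
      rw [eq_div_iff (by linarith : y - x ≠ 0), smul_eq_mul]
      have h2 : (x - y)⁻¹ * (x - y) = 1 := inv_mul_cancel₀ (by linarith)
      linear_combination h1 - (∫ s in y..x, gi s) * h2
    · apply hr.congr'
      filter_upwards [self_mem_nhdsWithin] with y (hy : x < y)
      have h1 : (∫ s in (0:ℝ)..y, gi s) - ∫ s in (0:ℝ)..x, gi s = ∫ s in x..y, gi s :=
        intervalIntegral.integral_interval_sub_left hgi.intervalIntegrable hgi.intervalIntegrable
      rw [setAverage_eq, integral_Icc_eq_integral_Ioc, ← intervalIntegral.integral_of_le hy.le,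
        Real.volume_real_Icc_of_le hy.le, slope_def_field]
      rw [eq_div_iff (by linarith : y - x ≠ 0), smul_eq_mul]
      have h2 : (y - x)⁻¹ * (y - x) = 1 := inv_mul_cancel₀ (by linarith)
      linear_combination (∫ s in x..y, gi s) * h2 - h1
  filter_upwards [aeIoo, ae_restrict_of_ae hFTC] with t htIoo hder
  have heq : (fun τ => ∫ s in Ioo (0:ℝ) τ, KHkernel H τ s * u s) =ᶠ[𝓝 t]
      (fun τ => ∫ s in (0:ℝ)..τ, gi s) := by
    filter_upwards [isOpen_Ioo.mem_nhds htIoo] with τ hτ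
    rw [part1 H hH u hm hsu τ ⟨hτ.1.le, hτ.2.le⟩, intervalIntegral.integral_of_le hτ.1.le,
      integral_Ioc_eq_integral_Ioo]
    refine setIntegral_congr_fun measurableSet_Ioo (fun r hr => ?_)
    have hmem : r ∈ Ioo (0:ℝ) 1 := ⟨hr.1, hr.2.trans hτ.2⟩
    have hrg : gi r = g r := Set.indicator_of_mem hmem g
    exact hrg.symm
  have hgt : gi t = g t := Set.indicator_of_mem htIoo g
  rw [← hgt]
  exact heq.hasDerivAt_iff.2 hder


/-- For `H ∈ (1/2,1)` and `û ∈ L²([0,1];ℝ)`, one has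
`∫_0^t K_H(t,s) û(s) ds = ∫_0^t (K̇_H û)(r) dr` for all `t ∈ [0,1]`; in particular
`t ↦ ∫_0^t K_H(t,s) û(s) ds` is absolutely continuous with a.e. derivative `K̇_H û`. -/
theorem KH_integral_eq_integral_Kdot (H : ℝ) (hH : H ∈ Ioo (1 / 2 : ℝ) 1)
    (u : ℝ → ℝ) (hu : MemLp u 2 (volume.restrict (Icc (0 : ℝ) 1))) :
    (∀ t ∈ Icc (0 : ℝ) 1,
        ∫ s in Ioo (0 : ℝ) t, KHkernel H t s * u s = ∫ r in Ioo (0 : ℝ) t, Kdot H u r) ∧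
    ∀ᵐ t ∂(volume.restrict (Icc (0 : ℝ) 1)),
      HasDerivAt (fun τ => ∫ s in Ioo (0 : ℝ) τ, KHkernel H τ s * u s) (Kdot H u t) t := by
  have hsm := hu.1
  set u' := hsm.mk u with hu'def
  have hm' : StronglyMeasurable u' := hsm.stronglyMeasurable_mk
  have huu' : u =ᵐ[volume.restrict (Icc (0:ℝ) 1)] u' := hsm.ae_eq_mk
  have hu' : MemLp u' 2 (volume.restrict (Icc (0:ℝ) 1)) := hu.ae_eq huu'
  have hsu' : Integrable (fun s => s ^ (1/2 - H) * ‖u' s‖)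
      (volume.restrict (Icc (0:ℝ) 1)) := suInt H hH u' hu'
  have main := main' H hH u' hm' hsu'
  have LHSeq : ∀ τ : ℝ, τ ≤ 1 →
      ∫ s in Ioo (0:ℝ) τ, KHkernel H τ s * u s
        = ∫ s in Ioo (0:ℝ) τ, KHkernel H τ s * u' s := by
    intro τ hτ
    apply MeasureTheory.integral_congr_ae
    have h := ae_restrict_of_ae_restrict_of_subset
      (show Ioo (0:ℝ) τ ⊆ Icc (0:ℝ) 1 from
        fun x hx => ⟨hx.1.le, hx.2.le.trans hτ⟩) huu'
    filter_upwards [h] with s hs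
    rw [hs]
  have KdotEq : ∀ r : ℝ, r ≤ 1 → Kdot H u r = Kdot H u' r := by
    intro r hr
    rw [Kdot, Kdot]
    congr 1
    apply MeasureTheory.integral_congr_ae
    have h := ae_restrict_of_ae_restrict_of_subset
      (show Ioo (0:ℝ) r ⊆ Icc (0:ℝ) 1 from
        fun x hx => ⟨hx.1.le, hx.2.le.trans hr⟩) huu'
    filter_upwards [h] with s hs
    rw [hs]
  constructor
  · intro t ht
    rw [LHSeq t ht.2, main.1 t ht]
    exact setIntegral_congr_fun measurableSet_Ioo
      (fun r hr => (KdotEq r (hr.2.le.trans ht.2)).symm)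
  · filter_upwards [main.2, aeIoo] with t hder htIoo
    have heq : (fun τ => ∫ s in Ioo (0:ℝ) τ, KHkernel H τ s * u s) =ᶠ[𝓝 t]
        (fun τ => ∫ s in Ioo (0:ℝ) τ, KHkernel H τ s * u' s) := by
      filter_upwards [Iic_mem_nhds htIoo.2] with τ hτ using LHSeq τ hτ
    rw [KdotEq t htIoo.2.le]
    exact heq.hasDerivAt_iff.2 hder

end
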